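/- arXiv:2601.04173 — 2 statements merged into one kernel-verified Lean document; each statement's English description precedes it below -/
import Mathlib

section
/- Let n ∈ ℝ³ be a unit vector, v ∈ ℝ³, and set A = v ⊗ n. Then 4 |e(A)·n|² = ‖A‖_F² + 3 (tr A)², where e(A) = (1/2)(A + Aᵀ) and |e(A)·n|² = Σ_i (Σ_j e(A)_{ij} n_j)². -/
open Matrix BigOperators

/-- If A = v ⊗ n with n a unit vector, then 4|e(A)·n|² = ‖A‖_F² + 3(tr A)². -/
theorem symmetric_part_normal (n v : Fin 3 → ℝ)
    (hn : ∑ i : Fin 3, n i ^ 2 = 1)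
    (A : Matrix (Fin 3) (Fin 3) ℝ) (hA : A = vecMulVec v n) :
    4 * ∑ i : Fin 3, (((1 / 2 : ℝ) • (A + Aᵀ)).mulVec n i) ^ 2
      = (∑ i : Fin 3, ∑ j : Fin 3, (A i j) ^ 2) + 3 * A.trace ^ 2 := by
  subst hA
  simp only [Matrix.trace, Matrix.diag, Matrix.mulVec, dotProduct,
    Matrix.smul_apply, Matrix.add_apply, Matrix.transpose_apply, vecMulVec_apply,
    Fin.sum_univ_three, smul_eq_mul]
  simp only [Fin.sum_univ_three] at hn
  nlinarith [sq_nonneg (v 0), sq_nonneg (v 1), sq_nonneg (v 2), hn,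
    sq_nonneg (v 0 * n 1 - v 1 * n 0), sq_nonneg (v 0 * n 2 - v 2 * n 0),
    sq_nonneg (v 1 * n 2 - v 2 * n 1)]
end

section
/- Let μ, λ ∈ ℝ, let n ∈ ℝ³ be a unit vector, v ∈ ℝ³, and set A = v ⊗ n. Define the stress matrix P := 2μ e(A) + λ (tr A) I, where e(A) = (1/2)(A + Aᵀ). Then |P·n|² = μ² ( ‖A‖_F² + 3 (tr A)² ) + 4 μ λ (tr A)² + λ² (tr A)². -/
open Matrix BigOperators

/-- If A = v ⊗ n with n a unit vector and P = 2μ e(A) + λ (tr A) I, then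
    |P·n|² = μ²(‖A‖_F² + 3(tr A)²) + 4μλ(tr A)² + λ²(tr A)². -/
theorem stress_vector_norm_sq (μ lam : ℝ) (n v : Fin 3 → ℝ)
    (hn : ∑ i : Fin 3, n i ^ 2 = 1)
    (A : Matrix (Fin 3) (Fin 3) ℝ) (hA : A = vecMulVec v n)
    (P : Matrix (Fin 3) (Fin 3) ℝ)
    (hP : P = (2 * μ) • ((1 / 2 : ℝ) • (A + Aᵀ)) + (lam * A.trace) • (1 : Matrix (Fin 3) (Fin 3) ℝ)) :
    ∑ i : Fin 3, (P.mulVec n i) ^ 2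
      = μ ^ 2 * ((∑ i : Fin 3, ∑ j : Fin 3, (A i j) ^ 2) + 3 * A.trace ^ 2)
        + 4 * μ * lam * A.trace ^ 2 + lam ^ 2 * A.trace ^ 2 := by
  subst hA hP
  simp only [Matrix.mulVec, dotProduct, Matrix.vecMulVec_apply, Matrix.trace,
    Matrix.diag, Fin.sum_univ_three, Matrix.add_apply, Matrix.smul_apply, Matrix.one_apply,
    Matrix.transpose_apply, smul_eq_mul]
  simp only [Fin.sum_univ_three] at hn
  norm_num [Fin.ext_iff]
  linear_combination (μ^2 * (v 0^2 + v 1^2 + v 2^2) * (n 0^2 + n 1^2 + n 2^2)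
    + (v 0 * n 0 + v 1 * n 1 + v 2 * n 2)^2 * (3*μ^2 + 4*μ*lam + lam^2)) * hn
end
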